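/- For all integers n > m ≥ 0, the number of RNA secondary structure words of length n with m base-pairs equals the number of Dyck paths of semilength n - m with exactly m + 1 peaks; that is, |A_{n,m}| = N_{n-m}^{m+1}. -/

import Mathlib

/-- The alphabet {'(', ')', '*'} for RNA secondary structure words. -/
inductive RSym : Type
  | op : RSym   -- '('
  | cl : RSym   -- ')'
  | st : RSym   -- '*'
  deriving DecidableEq

/-- `isRNA n m a` : `a` is an RNA secondary structure word of length `n` with `m` base-pairs. -/
def isRNA (n m : ℕ) (a : List RSym) : Prop :=
  a.length = n ∧
  a.count RSym.op = m ∧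
  a.count RSym.cl = m ∧
  (∀ p : ℕ, (a.take p).count RSym.cl ≤ (a.take p).count RSym.op) ∧
  ¬ ([RSym.op, RSym.cl] <:+: a)

/-- The alphabet {U, D} of Dyck path steps. -/
inductive Step : Type
  | U : Step
  | D : Step
  deriving DecidableEq

/-- `isDyck n w` : `w` is a Dyck path of semilength `n`. -/
def isDyck (n : ℕ) (w : List Step) : Prop :=
  w.length = 2 * n ∧
  w.count Step.U = n ∧
  w.count Step.D = n ∧
  (∀ p : ℕ, (w.take p).count Step.D ≤ (w.take p).count Step.U)

/-- `peaks w` : the number of indices `i` with `w_i = U` and `w_{i+1} = D`. -/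
def peaks (w : List Step) : ℕ := (w.zip w.tail).count (Step.U, Step.D)

open List

section Slack
variable {α : Type*} [DecidableEq α] {u d : α}

/-- ballot condition with slack `s`. -/
def Slk (u d : α) (s : ℕ) (l : List α) : Prop :=
  ∀ p : ℕ, (l.take p).count d ≤ s + (l.take p).count u

lemma slk_nil (u d : α) (s : ℕ) : Slk u d s [] := by intro p; simp

lemma slk_mono {s s' : ℕ} {l : List α} (hs : s ≤ s') (h : Slk u d s l) : Slk u d s' l :=
  fun p => (h p).trans (by omega)

lemma slk_cons (hud : u ≠ d) {s : ℕ} {l : List α} (x : α) (h : Slk u d s l) :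
    Slk u d (s + (if x = d then 1 else 0)) (x :: l) := by
  intro p
  cases p with
  | zero => simp
  | succ p =>
    have := h p
    simp only [take_succ_cons, count_cons, beq_iff_eq]
    split_ifs <;> simp_all <;> omega

lemma slk_cons_ne {s : ℕ} {l : List α} {x : α} (hud : u ≠ d) (hx : x ≠ d) (h : Slk u d s l) :
    Slk u d s (x :: l) := by
  have := slk_cons hud x h
  simpa [hx] using this

lemma slk_cons_u (hud : u ≠ d) {s : ℕ} {l : List α} (h : Slk u d (s + 1) l) :
    Slk u d s (u :: l) := by
  intro p
  cases p with
  | zero => simp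
  | succ p =>
    have := h p
    simp [take_succ_cons, count_cons, hud]
    omega

lemma slk_cons_d (hud : u ≠ d) {s : ℕ} {l : List α} (h : Slk u d s l) :
    Slk u d (s + 1) (d :: l) := by
  have := slk_cons hud d h
  simpa using this

lemma slk_tail_ne {s : ℕ} {l : List α} {x : α} (hxd : x ≠ d) (h : Slk u d s (x :: l)) :
    Slk u d (s + (if x = u then 1 else 0)) l := by
  intro p
  have := h (p + 1)
  simp only [take_succ_cons, count_cons, beq_iff_eq, if_neg hxd] at this
  split_ifs at this ⊢ <;> omega

lemma slk_single_d (hud : u ≠ d) : Slk u d 1 [d] := by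
  intro p; rcases p <;> simp [count_cons]

lemma slk_append {s t : ℕ} {l1 l2 : List α} (h1 : Slk u d s l1) (h2 : Slk u d t l2)
    (hc : l1.count d + t ≤ s + l1.count u) : Slk u d s (l1 ++ l2) := by
  intro p
  by_cases hp : p ≤ l1.length
  · rw [take_append_of_le_length hp]; exact h1 p
  · have hq : p = l1.length + (p - l1.length) := by omega
    rw [hq, take_length_add_append]
    have := h2 (p - l1.length)
    simp only [count_append]
    omega

lemma split_exists (hud : u ≠ d) :
    ∀ (xs : List α) (s : ℕ), xs.count d = xs.count u + (s + 1) → Slk u d (s + 1) xs →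
      ∃ b c, xs = b ++ d :: c ∧ b.count d = b.count u + s ∧ Slk u d s b := by
  intro xs
  induction xs with
  | nil => intro s hc _; simp at hc
  | cons x xs ih =>
    intro s hc hs
    by_cases hxd : x = d
    · cases s with
      | zero =>
        refine ⟨[], xs, by simp [hxd], by simp, slk_nil u d 0⟩
      | succ s' =>
        have hc' : xs.count d = xs.count u + (s' + 1) := by
          simp only [count_cons, beq_iff_eq, hxd, if_pos rfl, if_neg hud,
            if_neg (Ne.symm hud)] at hc
          split_ifs at hc <;> simp_all <;> omega
        have hs' : Slk u d (s' + 1) xs := by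
          intro p
          have := hs (p + 1)
          simp only [take_succ_cons, count_cons, beq_iff_eq, hxd, if_pos rfl,
            if_neg (Ne.symm hud)] at this
          split_ifs at this <;> simp_all <;> omega
        obtain ⟨b, c, hbc, hcb, hsb⟩ := ih s' hc' hs'
        refine ⟨x :: b, c, by rw [hbc, cons_append], ?_, ?_⟩
        · simp only [count_cons, beq_iff_eq, hxd]
          split_ifs <;> simp_all <;> omega
        · rw [hxd]; exact slk_cons_d hud hsb
    · have hstep : xs.count d = xs.count u + (s + (if x = u then 1 else 0)) + 1 := by
        simp only [count_cons, beq_iff_eq, if_neg hxd] at hc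
        split_ifs at hc ⊢ <;> omega
      have hs' : Slk u d (s + (if x = u then 1 else 0) + 1) xs := by
        have := slk_tail_ne hxd hs
        split_ifs at this ⊢ <;> [skip; skip] <;> first
          | simpa using this
          | (exact slk_mono (by omega) (by simpa using this))
      obtain ⟨b, c, hbc, hcb, hsb⟩ := ih (s + (if x = u then 1 else 0))
        (hstep.trans (Nat.add_assoc _ _ _)) hs'
      refine ⟨x :: b, c, by rw [hbc, cons_append], ?_, ?_⟩
      · simp only [count_cons, beq_iff_eq, if_neg hxd]
        split_ifs at hcb ⊢ <;> omega
      · by_cases hxu : x = u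
        · rw [hxu]; refine slk_cons_u hud ?_; simp [hxu] at hsb; exact hsb
        · refine slk_cons_ne hud hxd ?_; simp [hxu] at hsb; exact hsb

lemma split_c_props (hud : u ≠ d) {xs b c : List α} {s : ℕ}
    (hx : xs = b ++ d :: c) (hcx : xs.count d = xs.count u + (s + 1))
    (hcb : b.count d = b.count u + s) (hsx : Slk u d (s + 1) xs) :
    c.count d = c.count u ∧ Slk u d 0 c := by
  subst hx
  constructor
  · simp [count_append, count_cons, Ne.symm hud] at hcx
    omega
  · intro p
    have := hsx (b.length + (p + 1))
    rw [take_length_add_append] at this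
    simp [take_succ_cons, count_append, count_cons, Ne.symm hud] at this
    omega

lemma split_unique (hud : u ≠ d) {b b' c c' : List α}
    (he : b ++ d :: c = b' ++ d :: c')
    (hcb : b.count d = b.count u) (hsb : Slk u d 0 b)
    (hcb' : b'.count d = b'.count u) (hsb' : Slk u d 0 b') :
    b = b' ∧ c = c' := by
  rcases List.append_eq_append_iff.mp he with ⟨t, hb', hdc⟩ | ⟨t, hb, hdc⟩
  · cases t with
    | nil => simp at hb' hdc; exact ⟨hb'.symm, by simpa using hdc⟩
    | cons z t' =>
      exfalso
      have hz : z = d := by have := hdc; simp [cons_append] at this; exact this.1.symm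
      subst hb'
      rw [hz] at hsb'
      have h1 : ((b ++ d :: t')).take (b.length + 1) = b ++ [d] := by
        rw [take_append]; simp
      have := hsb' (b.length + 1)
      rw [h1] at this
      simp [count_append, count_cons, Ne.symm hud] at this
      omega
  · cases t with
    | nil => simp at hb hdc; exact ⟨hb, by simpa using hdc.symm⟩
    | cons z t' =>
      exfalso
      have hz : z = d := by have := hdc; simp [cons_append] at this; exact this.1.symm
      subst hb
      rw [hz] at hsb
      have h1 : ((b' ++ d :: t')).take (b'.length + 1) = b' ++ [d] := by
        rw [take_append]; simp
      have := hsb (b'.length + 1)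
      rw [h1] at this
      simp [count_append, count_cons, Ne.symm hud] at this
      omega

end Slack

lemma peaks_nil : peaks [] = 0 := rfl

lemma peaks_singleton (x : Step) : peaks [x] = 0 := rfl

lemma peaks_cons (x : Step) (l : List Step) :
    peaks (x :: l) =
      (if x = Step.U ∧ l.head? = some Step.D then 1 else 0) + peaks l := by
  cases l with
  | nil => simp [peaks]
  | cons y t =>
    simp only [peaks, tail_cons, zip_cons_cons, count_cons, head?_cons, Option.some.injEq]
    have : ((x, y) == (Step.U, Step.D)) = (decide (x = Step.U ∧ y = Step.D)) := by
      rcases x <;> rcases y <;> rfl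
    rw [this]
    by_cases hx : x = Step.U ∧ y = Step.D <;> simp [hx] <;> omega

lemma peaks_append (l1 l2 : List Step) :
    peaks (l1 ++ l2) = peaks l1 + peaks l2 +
      (if l1.getLast? = some Step.U ∧ l2.head? = some Step.D then 1 else 0) := by
  induction l1 with
  | nil => simp [peaks_nil]
  | cons x t ih =>
    cases t with
    | nil =>
      simp only [nil_append, singleton_append, peaks_cons]
      simp [peaks_nil]
      split_ifs <;> simp_all <;> omega
    | cons y t' =>
      rw [cons_append, peaks_cons, peaks_cons, ih]
      simp only [getLast?_cons_cons, cons_append, head?_cons]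
      by_cases hc : x = Step.U ∧ y = Step.D <;> simp [hc] <;> omega

lemma length_counts_step (l : List Step) : l.length = l.count Step.U + l.count Step.D := by
  induction l with
  | nil => simp
  | cons x t ih => rcases x <;> simp [count_cons, ih] <;> omega

/-- The recursive bijection between RNA words and Dyck paths. -/
inductive RD : List RSym → List Step → Prop
  | nil : RD [] []
  | star {a w} : RD a w → RD (RSym.st :: a) (Step.U :: w ++ [Step.D])
  | paren1 {b w} : RD b w → b ≠ [] → RD (RSym.op :: b ++ [RSym.cl]) (Step.U :: Step.D :: w)
  | paren2 {b c w1 w2} : RD b w1 → RD c w2 → b ≠ [] → c ≠ [] →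
      RD (RSym.op :: b ++ RSym.cl :: c) (Step.U :: w1 ++ Step.D :: w2)

lemma rel_nil_iff {a : List RSym} {w : List Step} (h : RD a w) : a = [] ↔ w = [] := by
  cases h <;> simp

lemma rel_counts {a : List RSym} {w : List Step} (h : RD a w) :
    a.count RSym.op = a.count RSym.cl ∧ w.count Step.U = w.count Step.D ∧
      w.count Step.U + a.count RSym.op = a.length := by
  induction h with
  | nil => simp
  | star h ih => simp [count_cons, count_append]; omega
  | paren1 h hb ih => simp [count_cons, count_append]; omega
  | paren2 hb hc hbn hcn ihb ihc => simp [count_cons, count_append]; omega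

lemma rel_slk {a : List RSym} {w : List Step} (h : RD a w) :
    Slk RSym.op RSym.cl 0 a ∧ Slk Step.U Step.D 0 w := by
  have hud1 : RSym.op ≠ RSym.cl := by simp
  have hud2 : Step.U ≠ Step.D := by simp
  induction h with
  | nil => exact ⟨slk_nil _ _ _, slk_nil _ _ _⟩
  | star h ih =>
    obtain ⟨iha, ihw⟩ := ih
    obtain ⟨hcnt, hwcnt, _⟩ := rel_counts h
    constructor
    · exact slk_cons_ne hud1 (by simp) iha
    · exact slk_cons_u hud2 (slk_append (slk_mono (by omega) ihw) (slk_single_d hud2)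
        (by simp; omega))
  | paren1 h hb ih =>
    obtain ⟨iha, ihw⟩ := ih
    obtain ⟨hcnt, hwcnt, _⟩ := rel_counts h
    constructor
    · exact slk_cons_u hud1 (slk_append (slk_mono (by omega) iha) (slk_single_d hud1)
        (by simp; omega))
    · exact slk_cons_u hud2 (slk_cons_d hud2 ihw)
  | paren2 hb hc hbn hcn ihb ihc =>
    obtain ⟨ihab, ihwb⟩ := ihb
    obtain ⟨ihac, ihwc⟩ := ihc
    obtain ⟨hcntb, hwcntb, _⟩ := rel_counts hb
    obtain ⟨hcntc, hwcntc, _⟩ := rel_counts hc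
    constructor
    · refine slk_cons_u hud1 (slk_append (slk_mono (by omega) ihab)
        (slk_cons_d hud1 ihac) (by simp [count_cons]; omega))
    · refine slk_cons_u hud2 (slk_append (slk_mono (by omega) ihwb)
        (slk_cons_d hud2 ihwc) (by simp [count_cons]; omega))

lemma rd_w_ends {a : List RSym} {w : List Step} (h : RD a w) (ha : a ≠ []) :
    w.head? = some Step.U ∧ w.getLast? = some Step.D := by
  induction h with
  | nil => simp at ha
  | @star a' w' h ih =>
    refine ⟨rfl, ?_⟩
    show (Step.U :: (w' ++ [Step.D])).getLast? = some Step.D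
    rw [← cons_append, getLast?_concat]
  | @paren1 b w' h hb ih =>
    refine ⟨rfl, ?_⟩
    have hw' : w' ≠ [] := fun hh => hb ((rel_nil_iff h).mpr hh)
    obtain ⟨x, t, rfl⟩ := List.exists_cons_of_ne_nil hw'
    simpa [getLast?_cons_cons] using (ih hb).2
  | @paren2 b c w1 w2 hb hc hbn hcn ihb ihc =>
    refine ⟨rfl, ?_⟩
    have hw2 : w2 ≠ [] := fun hh => hcn ((rel_nil_iff hc).mpr hh)
    obtain ⟨x, t, rfl⟩ := List.exists_cons_of_ne_nil hw2
    show ((Step.U :: w1) ++ (Step.D :: x :: t)).getLast? = some Step.D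
    rw [getLast?_append, getLast?_cons_cons, (ihc hcn).2]
    rfl

lemma rd_a_ends {a : List RSym} {w : List Step} (h : RD a w) (ha : a ≠ []) :
    (a.head? = some RSym.op ∨ a.head? = some RSym.st) ∧
      (a.getLast? = some RSym.cl ∨ a.getLast? = some RSym.st) := by
  induction h with
  | nil => simp at ha
  | @star a' w' h ih =>
    refine ⟨Or.inr rfl, ?_⟩
    rcases eq_or_ne a' [] with rfl | ha'
    · simp
    · obtain ⟨x, t, rfl⟩ := List.exists_cons_of_ne_nil ha'
      rw [getLast?_cons_cons]
      exact (ih ha').2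
  | @paren1 b w' h hb ih =>
    refine ⟨Or.inl rfl, Or.inl ?_⟩
    show ((RSym.op :: b) ++ [RSym.cl]).getLast? = some RSym.cl
    rw [getLast?_concat]
  | @paren2 b c w1 w2 hb hc hbn hcn ihb ihc =>
    refine ⟨Or.inl rfl, ?_⟩
    obtain ⟨x, t, rfl⟩ := List.exists_cons_of_ne_nil hcn
    show (((RSym.op :: b) ++ (RSym.cl :: x :: t)).getLast? = some RSym.cl ∨ _)
    rw [getLast?_append, getLast?_cons_cons]
    rcases (ihc hcn).2 with h2 | h2 <;> rw [h2] <;> [left; right] <;> rfl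

/-- the "no `()` factor" relation. -/
def NOC : RSym → RSym → Prop := fun x y => ¬(x = RSym.op ∧ y = RSym.cl)

lemma rd_chain {a : List RSym} {w : List Step} (h : RD a w) : a.Chain' NOC := by
  induction h with
  | nil => exact isChain_nil
  | @star a' w' h ih =>
    rw [Chain', isChain_cons]
    exact ⟨fun y _ => by simp [NOC], ih⟩
  | @paren1 b w' h hb ih =>
    rw [show RSym.op :: b ++ [RSym.cl] = RSym.op :: (b ++ [RSym.cl]) from rfl, Chain', isChain_cons]
    constructor
    · intro y hy
      obtain ⟨x, t, rfl⟩ := List.exists_cons_of_ne_nil hb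
      simp only [cons_append, head?_cons, Option.mem_def, Option.some.injEq] at hy
      subst hy
      rcases (rd_a_ends h hb).1 with h1 | h1 <;>
        (simp only [head?_cons, Option.some.injEq] at h1; subst h1; simp [NOC])
    · rw [isChain_append]
      refine ⟨ih, by simp, ?_⟩
      intro x hx y hy
      simp only [head?_cons, Option.mem_def, Option.some.injEq] at hy
      subst hy
      rcases (rd_a_ends h hb).2 with h1 | h1 <;>
        (rw [h1] at hx; simp only [Option.mem_def, Option.some.injEq] at hx; subst hx;
          simp [NOC])
  | @paren2 b c w1 w2 hb hc hbn hcn ihb ihc =>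
    rw [show RSym.op :: b ++ RSym.cl :: c = RSym.op :: (b ++ RSym.cl :: c) from rfl,
      Chain', isChain_cons]
    constructor
    · intro y hy
      obtain ⟨x, t, rfl⟩ := List.exists_cons_of_ne_nil hbn
      simp only [cons_append, head?_cons, Option.mem_def, Option.some.injEq] at hy
      subst hy
      rcases (rd_a_ends hb hbn).1 with h1 | h1 <;>
        (simp only [head?_cons, Option.some.injEq] at h1; subst h1; simp [NOC])
    · rw [isChain_append]
      refine ⟨ihb, ?_, ?_⟩
      · rw [isChain_cons]
        refine ⟨?_, ihc⟩
        intro y hy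
        rcases (rd_a_ends hc hcn).1 with h1 | h1 <;>
          (rw [h1] at hy; simp only [Option.mem_def, Option.some.injEq] at hy; subst hy;
            simp [NOC])
      · intro x hx y hy
        simp only [head?_cons, Option.mem_def, Option.some.injEq] at hy
        subst hy
        rcases (rd_a_ends hb hbn).2 with h1 | h1 <;>
          (rw [h1] at hx; simp only [Option.mem_def, Option.some.injEq] at hx; subst hx;
            simp [NOC])

lemma not_infix_of_chain {a : List RSym} (h : a.Chain' NOC) :
    ¬([RSym.op, RSym.cl] <:+: a) := by
  rintro ⟨s, t, rfl⟩
  rw [append_assoc] at h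
  have h2 := (isChain_append.mp h).2.1
  rw [show [RSym.op, RSym.cl] ++ t = RSym.op :: RSym.cl :: t from rfl, isChain_cons_cons] at h2
  exact h2.1 ⟨rfl, rfl⟩

lemma rd_peaks {a : List RSym} {w : List Step} (h : RD a w) (ha : a ≠ []) :
    peaks w = a.count RSym.op + 1 := by
  induction h with
  | nil => simp at ha
  | @star a' w' h ih =>
    rcases eq_or_ne a' [] with rfl | ha'
    · have : w' = [] := (rel_nil_iff h).mp rfl
      subst this
      simp [peaks_cons, peaks_nil, count_cons]
    · have hw' : w' ≠ [] := fun hh => ha' ((rel_nil_iff h).mpr hh)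
      have hends := rd_w_ends h ha'
      rw [cons_append, peaks_cons, peaks_append]
      obtain ⟨x, t, rfl⟩ := List.exists_cons_of_ne_nil hw'
      simp only [head?_cons, Option.some.injEq] at hends
      rw [cons_append, head?_cons]
      simp only [count_cons, peaks_nil, hends.2]
      rw [ih ha']
      simp [hends.1, peaks_singleton]
  | @paren1 b w' h hb ih =>
    rw [peaks_cons, peaks_cons]
    simp only [head?_cons, count_cons, count_append]
    rw [ih hb]
    simp
    omega
  | @paren2 b c w1 w2 hb hc hbn hcn ihb ihc =>
    have hw1 : w1 ≠ [] := fun hh => hbn ((rel_nil_iff hb).mpr hh)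
    have hends := rd_w_ends hb hbn
    rw [cons_append, peaks_cons, peaks_append, peaks_cons]
    obtain ⟨x, t, rfl⟩ := List.exists_cons_of_ne_nil hw1
    simp only [head?_cons, Option.some.injEq] at hends
    rw [cons_append, head?_cons]
    rw [ihb hbn, ihc hcn, hends.2]
    simp [hends.1, count_cons, count_append]
    omega

lemma exists_rd_of_rna :
    ∀ (N : ℕ) (a : List RSym), a.length ≤ N →
      a.count RSym.op = a.count RSym.cl → Slk RSym.op RSym.cl 0 a →
      ¬([RSym.op, RSym.cl] <:+: a) → ∃ w, RD a w := by
  intro N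
  induction N with
  | zero =>
    intro a hl _ _ _
    have : a = [] := by simpa using List.eq_nil_of_length_eq_zero (Nat.le_zero.mp hl)
    exact this ▸ ⟨[], RD.nil⟩
  | succ N ih =>
    intro a hl hc hs hinf
    match a with
    | [] => exact ⟨[], RD.nil⟩
    | RSym.st :: a' =>
      have h1 : a'.count RSym.op = a'.count RSym.cl := by
        simpa [count_cons] using hc
      have h2 : Slk RSym.op RSym.cl 0 a' := by
        have := slk_tail_ne (by simp) hs; simpa using this
      have h3 : ¬([RSym.op, RSym.cl] <:+: a') := fun hi =>
        hinf (hi.trans ⟨[RSym.st], [], by simp⟩)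
      obtain ⟨w, hw⟩ := ih a' (by simp at hl; omega) h1 h2 h3
      exact ⟨_, RD.star hw⟩
    | RSym.cl :: a' =>
      exfalso
      have := hs 1
      simp [count_cons] at this
    | RSym.op :: a' =>
      have hud1 : RSym.op ≠ RSym.cl := by simp
      have h1 : a'.count RSym.cl = a'.count RSym.op + (0 + 1) := by
        simp [count_cons] at hc; omega
      have h2 : Slk RSym.op RSym.cl (0 + 1) a' := by
        have := slk_tail_ne (d := RSym.cl) (by simp) hs; simpa using this
      obtain ⟨b, c, hbc, hcb, hsb⟩ := split_exists hud1 a' 0 h1 h2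
      obtain ⟨hcc, hsc⟩ := split_c_props hud1 hbc h1 hcb h2
      subst hbc
      have hbne : b ≠ [] := by
        rintro rfl
        exact hinf ⟨[], c, by simp⟩
      have hbinf : ¬([RSym.op, RSym.cl] <:+: b) := fun hi =>
        hinf (hi.trans ⟨[RSym.op], RSym.cl :: c, by simp⟩)
      have hcinf : ¬([RSym.op, RSym.cl] <:+: c) := fun hi =>
        hinf (hi.trans ⟨RSym.op :: b ++ [RSym.cl], [], by simp⟩)
      have hlb : b.length ≤ N := by simp [length_append] at hl; omega
      have hlc : c.length ≤ N := by simp [length_append] at hl; omega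
      obtain ⟨w1, hw1⟩ := ih b hlb (by omega) hsb hbinf
      obtain ⟨w2, hw2⟩ := ih c hlc (by omega) hsc hcinf
      rcases eq_or_ne c [] with rfl | hcne
      · have : w2 = [] := (rel_nil_iff hw2).mp rfl
        exact ⟨_, RD.paren1 hw1 hbne⟩
      · exact ⟨_, RD.paren2 hw1 hw2 hbne hcne⟩

lemma exists_rd_of_dyck :
    ∀ (N : ℕ) (w : List Step), w.length ≤ N →
      w.count Step.U = w.count Step.D → Slk Step.U Step.D 0 w →
      ∃ a, RD a w := by
  intro N
  induction N with
  | zero =>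
    intro w hl _ _
    have : w = [] := by simpa using List.eq_nil_of_length_eq_zero (Nat.le_zero.mp hl)
    exact this ▸ ⟨[], RD.nil⟩
  | succ N ih =>
    intro w hl hc hs
    match w with
    | [] => exact ⟨[], RD.nil⟩
    | Step.D :: w' =>
      exfalso
      have := hs 1
      simp [count_cons] at this
    | Step.U :: w' =>
      have hud2 : Step.U ≠ Step.D := by simp
      have h1 : w'.count Step.D = w'.count Step.U + (0 + 1) := by
        simp [count_cons] at hc; omega
      have h2 : Slk Step.U Step.D (0 + 1) w' := by
        have := slk_tail_ne (d := Step.D) (by simp) hs; simpa using this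
      obtain ⟨w1, w2, hw12, hcb, hsb⟩ := split_exists hud2 w' 0 h1 h2
      obtain ⟨hcc, hsc⟩ := split_c_props hud2 hw12 h1 hcb h2
      subst hw12
      have hl1 : w1.length ≤ N := by simp [length_append] at hl; omega
      have hl2 : w2.length ≤ N := by simp [length_append] at hl; omega
      obtain ⟨a1, ha1⟩ := ih w1 hl1 (by omega) hsb
      obtain ⟨a2, ha2⟩ := ih w2 hl2 (by omega) hsc
      rcases eq_or_ne w2 [] with rfl | hw2ne
      · exact ⟨_, RD.star ha1⟩
      · have ha2ne : a2 ≠ [] := fun hh => hw2ne ((rel_nil_iff ha2).mp hh)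
        rcases eq_or_ne w1 [] with rfl | hw1ne
        · have : a1 = [] := (rel_nil_iff ha1).mpr rfl
          exact ⟨_, RD.paren1 ha2 ha2ne⟩
        · have ha1ne : a1 ≠ [] := fun hh => hw1ne ((rel_nil_iff ha1).mp hh)
          exact ⟨_, RD.paren2 ha1 ha2 ha1ne ha2ne⟩

lemma rd_cases {a : List RSym} {w : List Step} (h : RD a w) :
    (a = [] ∧ w = []) ∨
    (∃ a1 w1, RD a1 w1 ∧ a = RSym.st :: a1 ∧ w = Step.U :: w1 ++ [Step.D]) ∨
    (∃ b w1, RD b w1 ∧ b ≠ [] ∧ a = RSym.op :: b ++ [RSym.cl] ∧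
      w = Step.U :: Step.D :: w1) ∨
    (∃ b c w1 w2, RD b w1 ∧ RD c w2 ∧ b ≠ [] ∧ c ≠ [] ∧
      a = RSym.op :: b ++ RSym.cl :: c ∧ w = Step.U :: w1 ++ Step.D :: w2) := by
  cases h with
  | nil => exact Or.inl ⟨rfl, rfl⟩
  | star h => exact Or.inr (Or.inl ⟨_, _, h, rfl, rfl⟩)
  | paren1 h hb => exact Or.inr (Or.inr (Or.inl ⟨_, _, h, hb, rfl, rfl⟩))
  | paren2 h1 h2 hb hc => exact Or.inr (Or.inr (Or.inr ⟨_, _, _, _, h1, h2, hb, hc, rfl, rfl⟩))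

lemma rd_right_unique {a : List RSym} {w : List Step} (h : RD a w) :
    ∀ w', RD a w' → w = w' := by
  have hud1 : RSym.op ≠ RSym.cl := by simp
  induction h with
  | nil =>
    intro w' h'
    rcases rd_cases h' with ⟨-, rfl⟩ | ⟨a1, w1, -, ha, -⟩ | ⟨b, w1, -, -, ha, -⟩ |
      ⟨b, c, w1, w2, -, -, -, -, ha, -⟩
    · rfl
    · simp at ha
    · simp at ha
    · simp at ha
  | @star a1 w1 h ih =>
    intro w' h'
    rcases rd_cases h' with ⟨ha, -⟩ | ⟨a2, w2, h2, ha, rfl⟩ | ⟨b2, w2, h2, -, ha, -⟩ |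
      ⟨b2, c2, w3, w4, h2, h3, -, -, ha, -⟩
    · simp at ha
    · obtain rfl : a1 = a2 := by simpa using ha
      rw [ih _ h2]
    · simp at ha
    · simp at ha
  | @paren1 b w1 hb hbn ih =>
    intro w' h'
    rcases rd_cases h' with ⟨ha, -⟩ | ⟨a2, w2, h2, ha, -⟩ | ⟨b2, w2, h2, hb2, ha, rfl⟩ |
      ⟨b2, c2, w3, w4, h2, h3, hb2, hc2, ha, -⟩
    · simp at ha
    · simp at ha
    · have he : b ++ RSym.cl :: ([] : List RSym) = b2 ++ RSym.cl :: ([] : List RSym) := by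
        simpa using ha
      obtain ⟨rfl, -⟩ := split_unique hud1 he (rel_counts hb).1.symm (rel_slk hb).1
        (rel_counts h2).1.symm (rel_slk h2).1
      rw [ih _ h2]
    · have he : b ++ RSym.cl :: ([] : List RSym) = b2 ++ RSym.cl :: c2 := by
        simpa using ha
      obtain ⟨rfl, hcc⟩ := split_unique hud1 he (rel_counts hb).1.symm (rel_slk hb).1
        (rel_counts h2).1.symm (rel_slk h2).1
      exact absurd hcc.symm hc2
  | @paren2 b c w1 w2 hb hc hbn hcn ihb ihc =>
    intro w' h'
    rcases rd_cases h' with ⟨ha, -⟩ | ⟨a2, w3, h2, ha, -⟩ | ⟨b2, w3, h2, hb2, ha, rfl⟩ |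
      ⟨b2, c2, w3, w4, h2, h3, hb2, hc2, ha, rfl⟩
    · simp at ha
    · simp at ha
    · have he : b ++ RSym.cl :: c = b2 ++ RSym.cl :: ([] : List RSym) := by
        simpa using ha
      obtain ⟨rfl, hcc⟩ := split_unique hud1 he (rel_counts hb).1.symm (rel_slk hb).1
        (rel_counts h2).1.symm (rel_slk h2).1
      exact absurd hcc hcn
    · have he : b ++ RSym.cl :: c = b2 ++ RSym.cl :: c2 := by
        simpa using ha
      obtain ⟨rfl, rfl⟩ := split_unique hud1 he (rel_counts hb).1.symm (rel_slk hb).1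
        (rel_counts h2).1.symm (rel_slk h2).1
      rw [ihb _ h2, ihc _ h3]

lemma rd_left_unique {a : List RSym} {w : List Step} (h : RD a w) :
    ∀ a', RD a' w → a = a' := by
  have hud2 : Step.U ≠ Step.D := by simp
  induction h with
  | nil =>
    intro a' h'
    rcases rd_cases h' with ⟨rfl, -⟩ | ⟨a1, w1, -, -, hw⟩ | ⟨b, w1, -, -, -, hw⟩ |
      ⟨b, c, w1, w2, -, -, -, -, -, hw⟩
    · rfl
    · simp at hw
    · simp at hw
    · simp at hw
  | @star a1 w1 h ih =>
    intro a' h'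
    rcases rd_cases h' with ⟨-, hw⟩ | ⟨a2, w2, h2, rfl, hw⟩ | ⟨b2, w2, h2, hb2, rfl, hw⟩ |
      ⟨b2, c2, w3, w4, h2, h3, hb2, hc2, rfl, hw⟩
    · simp at hw
    · have he : w1 ++ Step.D :: ([] : List Step) = w2 ++ Step.D :: ([] : List Step) := by
        simpa using hw
      obtain ⟨rfl, -⟩ := split_unique hud2 he (rel_counts h).2.1.symm (rel_slk h).2
        (rel_counts h2).2.1.symm (rel_slk h2).2
      rw [ih _ h2]
    · have he : w1 ++ Step.D :: ([] : List Step) = [] ++ Step.D :: w2 := by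
        simpa using hw
      obtain ⟨rfl, hcc⟩ := split_unique hud2 he (rel_counts h).2.1.symm (rel_slk h).2
        (by simp) (slk_nil _ _ _)
      exact absurd ((rel_nil_iff h2).mpr hcc.symm) hb2
    · have he : w1 ++ Step.D :: ([] : List Step) = w3 ++ Step.D :: w4 := by
        simpa using hw
      obtain ⟨rfl, hcc⟩ := split_unique hud2 he (rel_counts h).2.1.symm (rel_slk h).2
        (rel_counts h2).2.1.symm (rel_slk h2).2
      exact absurd ((rel_nil_iff h3).mpr hcc.symm) hc2
  | @paren1 b w1 hb hbn ih =>
    intro a' h'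
    rcases rd_cases h' with ⟨-, hw⟩ | ⟨a2, w2, h2, rfl, hw⟩ | ⟨b2, w2, h2, hb2, rfl, hw⟩ |
      ⟨b2, c2, w3, w4, h2, h3, hb2, hc2, rfl, hw⟩
    · simp at hw
    · have he : ([] : List Step) ++ Step.D :: w1 = w2 ++ Step.D :: ([] : List Step) := by
        simpa using hw
      obtain ⟨hw2, hcc⟩ := split_unique hud2 he (by simp) (slk_nil _ _ _)
        (rel_counts h2).2.1.symm (rel_slk h2).2
      exact absurd ((rel_nil_iff hb).mpr hcc) hbn
    · obtain rfl : w1 = w2 := by simpa using hw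
      rw [ih _ h2]
    · have he : ([] : List Step) ++ Step.D :: w1 = w3 ++ Step.D :: w4 := by
        simpa using hw
      obtain ⟨hw3, hcc⟩ := split_unique hud2 he (by simp) (slk_nil _ _ _)
        (rel_counts h2).2.1.symm (rel_slk h2).2
      exact absurd ((rel_nil_iff h2).mpr hw3.symm) hb2
  | @paren2 b c w1 w2 hb hc hbn hcn ihb ihc =>
    intro a' h'
    rcases rd_cases h' with ⟨-, hw⟩ | ⟨a2, w3, h2, rfl, hw⟩ | ⟨b2, w3, h2, hb2, rfl, hw⟩ |
      ⟨b2, c2, w3, w4, h2, h3, hb2, hc2, rfl, hw⟩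
    · simp at hw
    · have he : w1 ++ Step.D :: w2 = w3 ++ Step.D :: ([] : List Step) := by
        simpa using hw
      obtain ⟨rfl, hcc⟩ := split_unique hud2 he (rel_counts hb).2.1.symm (rel_slk hb).2
        (rel_counts h2).2.1.symm (rel_slk h2).2
      exact absurd ((rel_nil_iff hc).mpr hcc) hcn
    · have he : w1 ++ Step.D :: w2 = ([] : List Step) ++ Step.D :: w3 := by
        simpa using hw
      obtain ⟨rfl, hcc⟩ := split_unique hud2 he (rel_counts hb).2.1.symm (rel_slk hb).2
        (by simp) (slk_nil _ _ _)
      exact absurd ((rel_nil_iff hb).mpr rfl) hbn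
    · have he : w1 ++ Step.D :: w2 = w3 ++ Step.D :: w4 := by
        simpa using hw
      obtain ⟨rfl, rfl⟩ := split_unique hud2 he (rel_counts hb).2.1.symm (rel_slk hb).2
        (rel_counts h2).2.1.symm (rel_slk h2).2
      rw [ihb _ h2, ihc _ h3]


/-- For all `n > m ≥ 0`, the number of RNA secondary structure words of length `n` with
`m` base-pairs equals the number of Dyck paths of semilength `n - m` with exactly `m + 1`
peaks; that is, `|A_{n,m}| = N_{n-m}^{m+1}`. -/
theorem rna_count_eq_narayana_dyck_count (n m : ℕ) (h : m < n) :
    {a : List RSym | isRNA n m a}.ncard =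
      {w : List Step | isDyck (n - m) w ∧ peaks w = m + 1}.ncard := by
  have key1 : ∀ a : List RSym, isRNA n m a →
      ∃ w, RD a w ∧ (isDyck (n - m) w ∧ peaks w = m + 1) := by
    intro a ha
    obtain ⟨hlen, hop, hcl, hbal, hinf⟩ := ha
    have hane : a ≠ [] := by
      rintro rfl; simp at hlen; omega
    have hslk : Slk RSym.op RSym.cl 0 a := by
      intro p; simpa using hbal p
    obtain ⟨w, hw⟩ := exists_rd_of_rna a.length a le_rfl (hop.trans hcl.symm) hslk hinf
    obtain ⟨hoc, huw, hsum⟩ := rel_counts hw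
    obtain ⟨-, hwslk⟩ := rel_slk hw
    have hpk := rd_peaks hw hane
    have hU : w.count Step.U = n - m := by omega
    have hD : w.count Step.D = n - m := by omega
    have hlw : w.length = 2 * (n - m) := by
      have := length_counts_step w; omega
    refine ⟨w, hw, ⟨hlw, hU, hD, fun p => by simpa using hwslk p⟩, by omega⟩
  have key2 : ∀ w : List Step, (isDyck (n - m) w ∧ peaks w = m + 1) →
      ∃ a, RD a w ∧ isRNA n m a := by
    intro w hw
    obtain ⟨⟨hlw, hU, hD, hbal⟩, hpk⟩ := hw
    have hwslk : Slk Step.U Step.D 0 w := by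
      intro p; simpa using hbal p
    obtain ⟨a, ha⟩ := exists_rd_of_dyck w.length w le_rfl (hU.trans hD.symm) hwslk
    have hane : a ≠ [] := by
      rintro rfl
      have : w = [] := (rel_nil_iff ha).mp rfl
      rw [this, peaks_nil] at hpk
      omega
    obtain ⟨hoc, huw, hsum⟩ := rel_counts ha
    obtain ⟨haslk, -⟩ := rel_slk ha
    have hpk2 := rd_peaks ha hane
    have hopm : a.count RSym.op = m := by omega
    refine ⟨a, ha, ?_, hopm, by omega, fun p => by simpa using haslk p, ?_⟩
    · omega
    · exact not_infix_of_chain (rd_chain ha)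
  rw [← Nat.card_coe_set_eq, ← Nat.card_coe_set_eq]
  apply Nat.card_congr
  exact {
    toFun := fun x => ⟨(key1 x.1 x.2).choose, (key1 x.1 x.2).choose_spec.2⟩
    invFun := fun y => ⟨(key2 y.1 y.2).choose, (key2 y.1 y.2).choose_spec.2⟩
    left_inv := fun x => Subtype.ext
      (rd_left_unique (key2 _ (key1 x.1 x.2).choose_spec.2).choose_spec.1 x.1
        (key1 x.1 x.2).choose_spec.1)
    right_inv := fun y => Subtype.ext
      (rd_right_unique (key1 _ (key2 y.1 y.2).choose_spec.2).choose_spec.1 y.1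
        (key2 y.1 y.2).choose_spec.1)
  }
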